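/- Let δ be an integer with 1 ≤ δ ≤ q−1 and let β = (γ^δ·α_1, …, γ^δ·α_k) ∈ F_q^k (so n = k). If k = 2ℓ and (k : F_q)·γ^{δk} + Σ_{i=1}^{ℓ} a_{1i}² ≠ 0 in F_q, then the GRL code GRL_k(β, A) is Euclidean LCD. -/
import Mathlib


open Matrix BigOperators Finset

/-- Euclidean dual of a code `C ⊆ F^ι`. -/
def dualE {F : Type} [Field F] {ι : Type} [Fintype ι] (C : Submodule F (ι → F)) :
    Submodule F (ι → F) where
  carrier := {x | ∀ y ∈ C, ∑ i, x i * y i = 0}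
  add_mem' := by
    intro a b ha hb y hy
    have h : ∑ i, (a + b) i * y i = (∑ i, a i * y i) + ∑ i, b i * y i := by
      rw [← Finset.sum_add_distrib]
      exact Finset.sum_congr rfl fun i _ => add_mul _ _ _
    rw [h, ha y hy, hb y hy, add_zero]
  zero_mem' := by intro y hy; simp
  smul_mem' := by
    intro c a ha y hy
    have h : ∑ i, (c • a) i * y i = c * ∑ i, a i * y i := by
      rw [Finset.mul_sum]
      exact Finset.sum_congr rfl fun i _ => by
        simp [Pi.smul_apply, smul_eq_mul, mul_assoc]
    rw [h, ha y hy, mul_zero]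

/-- Generator matrix of the generalized Roth–Lempel code: evaluation columns indexed by `ι`
(entry `β j ^ r`), extra columns indexed by `Fin ℓ` (zero for rows `r < k - ℓ`, and the
corresponding row of `A` for rows `k - ℓ ≤ r ≤ k - 1`). -/
def GRLmatrix {F : Type} [Field F] (k ℓ : ℕ) (hℓk : ℓ ≤ k) {ι : Type} (β : ι → F)
    (A : Matrix (Fin ℓ) (Fin ℓ) F) : Matrix (Fin k) (ι ⊕ Fin ℓ) F :=
  fun r => Sum.elim (fun j => β j ^ (r : ℕ))
    (fun j' => if _h : (r : ℕ) < k - ℓ then 0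
      else A ⟨(r : ℕ) - (k - ℓ), by have := r.isLt; omega⟩ j')

/-- The generalized Roth–Lempel code: the row span of `GRLmatrix`. -/
def GRLcode {F : Type} [Field F] (k ℓ : ℕ) (hℓk : ℓ ≤ k) {ι : Type} (β : ι → F)
    (A : Matrix (Fin ℓ) (Fin ℓ) F) : Submodule F ((ι ⊕ Fin ℓ) → F) :=
  Submodule.span F (Set.range (GRLmatrix k ℓ hℓk β A))

/-- if `k = 2ℓ` and `k·γ^{δk} + Σ a_{1i}² ≠ 0`, the GRL code with
`β = (γ^δ·α_1, …, γ^δ·α_k)` is Euclidean LCD. -/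
lemma geom_aux {F : Type} [Field F] [DecidableEq F] (k : ℕ) (ζ : F) (hζ : ζ ^ k = 1) :
    ∑ j : Fin k, ζ ^ ((j : ℕ) + 1) = if ζ = 1 then (k : F) else 0 := by
  by_cases h : ζ = 1
  · simp [h]
  · rw [if_neg h]
    have h2 : ∑ j : Fin k, ζ ^ ((j : ℕ) + 1) = ζ * ∑ i ∈ Finset.range k, ζ ^ i := by
      rw [Finset.mul_sum, ← Fin.sum_univ_eq_sum_range (fun i => ζ * ζ ^ i) k]
      exact Finset.sum_congr rfl fun i _ => by ring
    rw [h2, geom_sum_eq h, hζ, sub_self, zero_div, mul_zero]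

theorem stmt1 {F : Type} [Field F] [Fintype F]
    (p m : ℕ) (hp : p.Prime) (hodd : Odd p) (hm : 0 < m)
    (hcard : Fintype.card F = p ^ m)
    (γ : Fˣ) (hγ : ∀ x : Fˣ, x ∈ Subgroup.zpowers γ)
    (k ℓ : ℕ) (hℓ2 : 2 ≤ ℓ) (hℓk : ℓ ≤ k) (hkdvd : k ∣ Fintype.card F - 1)
    (A : Matrix (Fin ℓ) (Fin ℓ) F) (hA : IsUnit A.det)
    (α : Fin k → F)
    (hα : ∀ i : Fin k, α i = (γ : F) ^ ((Fintype.card F - 1) / k * ((i : ℕ) + 1)))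
    (δ : ℕ) (hδ1 : 1 ≤ δ) (hδq : δ ≤ Fintype.card F - 1)
    (β : Fin k → F) (hβ : ∀ i, β i = (γ : F) ^ δ * α i)
    (hk2ℓ : k = 2 * ℓ)
    (hne : (k : F) * (γ : F) ^ (δ * k) + ∑ i : Fin ℓ, A ⟨0, by omega⟩ i ^ 2 ≠ 0) :
    GRLcode k ℓ hℓk β A ⊓ dualE (GRLcode k ℓ hℓk β A) = ⊥ := by
  classical
  set q := Fintype.card F with hq
  have hk4 : 4 ≤ k := by omega
  have hq2 : 2 ≤ q := Fintype.one_lt_card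
  set e := (q - 1) / k with he
  have hek : e * k = q - 1 := Nat.div_mul_cancel hkdvd
  have he0 : 0 < e := by
    rcases Nat.eq_zero_or_pos e with h | h
    · rw [h] at hek; simp at hek; omega
    · exact h
  have hγF : (γ : F) ≠ 0 := Units.ne_zero γ
  have horder : orderOf γ = q - 1 := by
    rw [orderOf_eq_card_of_forall_mem_zpowers hγ, Nat.card_eq_fintype_card,
      Fintype.card_units]
  have hγu : γ ^ (q - 1) = 1 := by
    rw [← horder]; exact pow_orderOf_eq_one γ
  have hγ1 : (γ : F) ^ (q - 1) = 1 := by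
    rw [← Units.val_pow_eq_pow_val, hγu, Units.val_one]
  have hζiff : ∀ t : ℕ, ((γ : F) ^ (e * t) = 1 ↔ k ∣ t) := by
    intro t
    rw [← Units.val_pow_eq_pow_val]
    constructor
    · intro h
      have h1 : γ ^ (e * t) = 1 := Units.ext h
      have h2 : orderOf γ ∣ e * t := orderOf_dvd_iff_pow_eq_one.mpr h1
      rw [horder, ← hek] at h2
      exact (Nat.mul_dvd_mul_iff_left he0).mp h2
    · rintro ⟨c, rfl⟩
      rw [show e * (k * c) = (q - 1) * c by rw [← hek]; ring, pow_mul, hγu, one_pow,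
        Units.val_one]
  -- characteristic
  have hpchar : CharP F p := by
    obtain ⟨p', hp'inst⟩ := CharP.exists F
    haveI := hp'inst
    have hp'pr : p'.Prime := CharP.char_is_prime F p'
    obtain ⟨n, _, hcard'⟩ := FiniteField.card F p'
    have hpp' : p = p' := by
      have hdvd : p ∣ p' ^ (n : ℕ) := by
        rw [← hcard', ← hq, hcard]
        exact dvd_pow_self p hm.ne'
      exact (Nat.prime_dvd_prime_iff_eq hp hp'pr).mp (hp.dvd_of_dvd_pow hdvd)
    rwa [hpp']
  haveI := hpchar
  have hkF : (k : F) ≠ 0 := by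
    rw [Ne, CharP.cast_eq_zero_iff F p]
    intro hpk
    have h1 : p ∣ q - 1 := hpk.trans hkdvd
    have h2 : p ∣ q := by rw [hcard]; exact dvd_pow_self p hm.ne'
    have h3 : p ∣ q - (q - 1) := Nat.dvd_sub h2 h1
    rw [show q - (q - 1) = 1 by omega] at h3
    exact hp.one_lt.ne' (Nat.dvd_one.mp h3)
  have hc0 : (k : F) * (γ : F) ^ (δ * k) ≠ 0 := mul_ne_zero hkF (pow_ne_zero _ hγF)
  set G := GRLmatrix k ℓ hℓk β A with hGdef
  -- entries
  have hGl : ∀ r j : Fin k, G r (Sum.inl j)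
      = (γ : F) ^ (δ * (r : ℕ)) * ((γ : F) ^ (e * (r : ℕ))) ^ ((j : ℕ) + 1) := by
    intro r j
    show (β j) ^ (r : ℕ) = _
    rw [hβ, hα, mul_pow, ← pow_mul, ← pow_mul, ← pow_mul]
    congr 1
    congr 1
    ring
  have hGr0 : ∀ r : Fin k, (r : ℕ) < ℓ → ∀ j' : Fin ℓ, G r (Sum.inr j') = 0 := by
    intro r hr j'
    show (if _h : (r : ℕ) < k - ℓ then (0 : F) else _) = 0
    rw [dif_pos (by omega)]
  have hℓlt : ℓ < k := by omega
  have hGll : ∀ j' : Fin ℓ, G ⟨ℓ, hℓlt⟩ (Sum.inr j') = A ⟨0, by omega⟩ j' := by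
    intro j'
    show (if _h : ((⟨ℓ, hℓlt⟩ : Fin k) : ℕ) < k - ℓ then (0 : F) else _) = _
    rw [dif_neg (by simp; omega)]
    apply congrFun
    apply congrArg
    apply Fin.ext
    show ℓ - (k - ℓ) = 0
    omega
  -- inner products of evaluation parts
  have hinner : ∀ r s : Fin k, (∑ j : Fin k, G s (Sum.inl j) * G r (Sum.inl j))
      = if k ∣ (r : ℕ) + (s : ℕ)
        then (k : F) * (γ : F) ^ (δ * ((r : ℕ) + (s : ℕ))) else 0 := by
    intro r s
    have h1 : ∀ j : Fin k, G s (Sum.inl j) * G r (Sum.inl j)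
        = (γ : F) ^ (δ * ((r : ℕ) + (s : ℕ)))
          * ((γ : F) ^ (e * ((r : ℕ) + (s : ℕ)))) ^ ((j : ℕ) + 1) := by
      intro j
      rw [hGl, hGl, ← pow_mul, ← pow_mul, ← pow_mul,
        ← pow_add, ← pow_add, ← pow_add, ← pow_add]
      congr 1
      ring
    rw [Finset.sum_congr rfl fun j _ => h1 j, ← Finset.mul_sum]
    have hζk : ((γ : F) ^ (e * ((r : ℕ) + (s : ℕ)))) ^ k = 1 := by
      rw [← pow_mul, show e * ((r : ℕ) + (s : ℕ)) * k = (q - 1) * ((r : ℕ) + (s : ℕ)) by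
        rw [← hek]; ring, pow_mul, hγ1, one_pow]
    rw [geom_aux k _ hζk]
    by_cases hd : k ∣ (r : ℕ) + (s : ℕ)
    · rw [if_pos ((hζiff _).mpr hd), if_pos hd]; ring
    · rw [if_neg fun h => hd ((hζiff _).mp h), if_neg hd, mul_zero]
  have hdvd2 : ∀ a b : ℕ, 0 < a → a < k → b < k → (k ∣ a + b ↔ a + b = k) := by
    intro a b ha hak hbk
    constructor
    · rintro ⟨c, hc⟩
      have hc1 : c < 2 := by
        by_contra hcon
        have : k * 2 ≤ k * c := Nat.mul_le_mul_left k (by omega)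
        omega
      interval_cases c <;> omega
    · intro h; exact ⟨1, by omega⟩
  -- membership
  rw [eq_bot_iff]
  intro x hx
  obtain ⟨hxC, hxD⟩ := Submodule.mem_inf.mp hx
  have hxC' : x ∈ Submodule.span F (Set.range G) := hxC
  obtain ⟨v, hv⟩ := (Submodule.mem_span_range_iff_exists_fun F).mp hxC'
  have hdual : ∀ y ∈ GRLcode k ℓ hℓk β A, ∑ i, x i * y i = 0 := hxD
  have heq : ∀ r : Fin k, ∑ s : Fin k, v s * (∑ j, G s j * G r j) = 0 := by
    intro r
    have h1 : ∑ j, x j * G r j = 0 :=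
      hdual (G r) (Submodule.subset_span ⟨r, rfl⟩)
    calc ∑ s : Fin k, v s * ∑ j, G s j * G r j
        = ∑ s : Fin k, ∑ j, v s * (G s j * G r j) := by
          exact Finset.sum_congr rfl fun s _ => Finset.mul_sum _ _ _
      _ = ∑ j, ∑ s : Fin k, v s * (G s j * G r j) := Finset.sum_comm
      _ = ∑ j, (∑ s : Fin k, v s * G s j) * G r j := by
          refine Finset.sum_congr rfl fun j _ => ?_
          rw [Finset.sum_mul]
          exact Finset.sum_congr rfl fun s _ => (mul_assoc _ _ _).symm
      _ = ∑ j, x j * G r j := by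
          refine Finset.sum_congr rfl fun j _ => ?_
          congr 1
          have h2 := congrFun hv j
          simpa using h2
      _ = 0 := h1
  have heq2 : ∀ r : Fin k, (∑ s : Fin k, v s *
      ((if k ∣ (r : ℕ) + (s : ℕ)
          then (k : F) * (γ : F) ^ (δ * ((r : ℕ) + (s : ℕ))) else 0)
        + ∑ j' : Fin ℓ, G s (Sum.inr j') * G r (Sum.inr j'))) = 0 := by
    intro r
    refine Eq.trans (Finset.sum_congr rfl fun s _ => ?_) (heq r)
    rw [Fintype.sum_sum_type, hinner r s]
  -- step 1 : v at indices ≥ ℓ+1 vanish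
  have hv_hi : ∀ s : Fin k, ℓ < (s : ℕ) → v s = 0 := by
    intro s hs
    have hrlt : k - (s : ℕ) < k := by omega
    set r : Fin k := ⟨k - (s : ℕ), hrlt⟩ with hrdef
    have hrval : (r : ℕ) = k - (s : ℕ) := rfl
    have hrℓ : (r : ℕ) < ℓ := by rw [hrval]; omega
    have hside : ∀ b : Fin k, b ∈ Finset.univ → b ≠ s → v b *
        ((if k ∣ (r : ℕ) + (b : ℕ)
            then (k : F) * (γ : F) ^ (δ * ((r : ℕ) + (b : ℕ))) else 0)
          + ∑ j' : Fin ℓ, G b (Sum.inr j') * G r (Sum.inr j')) = 0 := by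
      intro b _ hb
      have hbs : (b : ℕ) ≠ (s : ℕ) := fun h => hb (Fin.ext h)
      have hnd : ¬ k ∣ (r : ℕ) + (b : ℕ) := by
        rw [hrval]
        intro hd
        have := (hdvd2 (k - (s : ℕ)) (b : ℕ) (by omega) (by omega) b.isLt).mp hd
        omega
      rw [if_neg hnd, Finset.sum_eq_zero fun j' _ => by rw [hGr0 r hrℓ j', mul_zero]]
      ring
    have h0 := heq2 r
    rw [Finset.sum_eq_single_of_mem s (Finset.mem_univ s) hside] at h0
    have hrs : (r : ℕ) + (s : ℕ) = k := by rw [hrval]; omega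
    rw [hrs, if_pos dvd_rfl,
      Finset.sum_eq_zero fun j' _ => by rw [hGr0 r hrℓ j', mul_zero], add_zero] at h0
    exact (mul_eq_zero.mp h0).resolve_right hc0
  -- step 2 : v 0 = 0
  have hv0 : v ⟨0, by omega⟩ = 0 := by
    set r : Fin k := ⟨0, by omega⟩ with hrdef
    have hrval : (r : ℕ) = 0 := rfl
    have hrℓ : (r : ℕ) < ℓ := by omega
    have hside : ∀ b : Fin k, b ∈ Finset.univ → b ≠ r → v b *
        ((if k ∣ (r : ℕ) + (b : ℕ)
            then (k : F) * (γ : F) ^ (δ * ((r : ℕ) + (b : ℕ))) else 0)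
          + ∑ j' : Fin ℓ, G b (Sum.inr j') * G r (Sum.inr j')) = 0 := by
      intro b _ hb
      have hbs : (b : ℕ) ≠ 0 := fun h => hb (Fin.ext (by rw [h, hrval]))
      have hnd : ¬ k ∣ (r : ℕ) + (b : ℕ) := by
        rw [hrval, zero_add]
        intro hd
        exact hbs (Nat.eq_zero_of_dvd_of_lt hd b.isLt ▸ rfl)
      rw [if_neg hnd, Finset.sum_eq_zero fun j' _ => by rw [hGr0 r hrℓ j', mul_zero]]
      ring
    have h0 := heq2 r
    rw [Finset.sum_eq_single_of_mem r (Finset.mem_univ r) hside] at h0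
    rw [hrval, if_pos (by simp), Nat.add_zero, Nat.mul_zero, pow_zero, mul_one,
      Finset.sum_eq_zero fun j' _ => by rw [hGr0 r hrℓ j', mul_zero], add_zero] at h0
    exact (mul_eq_zero.mp h0).resolve_right hkF
  -- step 3 : v ℓ = 0
  have hvl : v ⟨ℓ, hℓlt⟩ = 0 := by
    set r : Fin k := ⟨ℓ, hℓlt⟩ with hrdef
    have hrval : (r : ℕ) = ℓ := rfl
    have hside : ∀ b : Fin k, b ∈ Finset.univ → b ≠ r → v b *
        ((if k ∣ (r : ℕ) + (b : ℕ)
            then (k : F) * (γ : F) ^ (δ * ((r : ℕ) + (b : ℕ))) else 0)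
          + ∑ j' : Fin ℓ, G b (Sum.inr j') * G r (Sum.inr j')) = 0 := by
      intro b _ hb
      have hbs : (b : ℕ) ≠ ℓ := fun h => hb (Fin.ext (by rw [h, hrval]))
      by_cases hbl : (b : ℕ) < ℓ
      · have hnd : ¬ k ∣ (r : ℕ) + (b : ℕ) := by
          rw [hrval]
          intro hd
          have := Nat.eq_zero_of_dvd_of_lt hd (by omega)
          omega
        rw [if_neg hnd, Finset.sum_eq_zero fun j' _ => by rw [hGr0 b hbl j', zero_mul]]
        ring
      · rw [hv_hi b (by omega), zero_mul]
    have h0 := heq2 r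
    rw [Finset.sum_eq_single_of_mem r (Finset.mem_univ r) hside] at h0
    rw [hrval, show ℓ + ℓ = k by omega, if_pos dvd_rfl,
      Finset.sum_congr rfl fun j' _ => by
        rw [hGll j', ← pow_two]] at h0
    exact (mul_eq_zero.mp h0).resolve_right hne
  -- step 4 : middle indices
  have hv_mid : ∀ s : Fin k, 0 < (s : ℕ) → (s : ℕ) < ℓ → v s = 0 := by
    intro s hs1 hs2
    have hrlt : k - (s : ℕ) < k := by omega
    set r : Fin k := ⟨k - (s : ℕ), hrlt⟩ with hrdef
    have hrval : (r : ℕ) = k - (s : ℕ) := rfl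
    have hside : ∀ b : Fin k, b ∈ Finset.univ → b ≠ s → v b *
        ((if k ∣ (r : ℕ) + (b : ℕ)
            then (k : F) * (γ : F) ^ (δ * ((r : ℕ) + (b : ℕ))) else 0)
          + ∑ j' : Fin ℓ, G b (Sum.inr j') * G r (Sum.inr j')) = 0 := by
      intro b _ hb
      have hbs : (b : ℕ) ≠ (s : ℕ) := fun h => hb (Fin.ext h)
      by_cases hbl : (b : ℕ) < ℓ
      · have hnd : ¬ k ∣ (r : ℕ) + (b : ℕ) := by
          rw [hrval]
          intro hd
          have := (hdvd2 (k - (s : ℕ)) (b : ℕ) (by omega) (by omega) b.isLt).mp hd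
          omega
        rw [if_neg hnd, Finset.sum_eq_zero fun j' _ => by rw [hGr0 b hbl j', zero_mul]]
        ring
      · by_cases hbe : (b : ℕ) = ℓ
        · rw [show b = ⟨ℓ, hℓlt⟩ from Fin.ext hbe, hvl, zero_mul]
        · rw [hv_hi b (by omega), zero_mul]
    have h0 := heq2 r
    rw [Finset.sum_eq_single_of_mem s (Finset.mem_univ s) hside] at h0
    have hrs : (r : ℕ) + (s : ℕ) = k := by rw [hrval]; omega
    rw [hrs, if_pos dvd_rfl,
      Finset.sum_eq_zero fun j' _ => by rw [hGr0 s hs2 j', zero_mul], add_zero] at h0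
    exact (mul_eq_zero.mp h0).resolve_right hc0
  -- conclude
  have hvall : ∀ s : Fin k, v s = 0 := by
    intro s
    rcases Nat.eq_zero_or_pos (s : ℕ) with h0 | h0
    · rw [show s = ⟨0, by omega⟩ from Fin.ext h0]; exact hv0
    rcases lt_trichotomy (s : ℕ) ℓ with h1 | h1 | h1
    · exact hv_mid s h0 h1
    · rw [show s = ⟨ℓ, hℓlt⟩ from Fin.ext h1]; exact hvl
    · exact hv_hi s h1
  rw [Submodule.mem_bot, ← hv]
  exact Finset.sum_eq_zero fun s _ => by rw [hvall s, zero_smul]
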